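/- Let A and D be positive integers, i a nonnegative integer, and k any integer. If j is a skew-compensated clock of i (a nonnegative integer with |j·A − i·D| ≤ |m·A − i·D| for every nonnegative integer m), then |j − k| ≤ ⌈|k·A − i·D| / A⌉, where the ceiling is of the rational number |k·A − i·D|/A; in particular, starting the direct search from any integer k reaches a skew-compensated clock within ⌈|k·A − i·D|/A⌉ unit steps. -/
import Mathlib


/-- If `j` is a skew-compensated clock of `i`, then for any
integer `k`, `|j - k| ≤ ⌈|k·A - i·D| / A⌉` (ceiling of the rational). -/
theorem scc_dist_from_start (A D i k j : ℤ) (hA : 0 < A) (hD : 0 < D)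
    (hi : 0 ≤ i) (hj : 0 ≤ j)
    (hscc : ∀ m : ℤ, 0 ≤ m → |j * A - i * D| ≤ |m * A - i * D|) :
    |j - k| ≤ ⌈(|k * A - i * D| : ℚ) / (A : ℚ)⌉ := by
  set N : ℤ := ⌈(|k * A - i * D| : ℚ) / (A : ℚ)⌉ with hN
  -- |Δ| ≤ N * A
  have hceil : (|k * A - i * D| : ℚ) / (A : ℚ) ≤ (N : ℚ) := Int.le_ceil _
  have hAQ : (0 : ℚ) < (A : ℚ) := by exact_mod_cast hA
  have h1 : (|k * A - i * D| : ℚ) ≤ (N : ℚ) * (A : ℚ) := by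
    rw [div_le_iff₀ hAQ] at hceil; exact hceil
  have hDel : |k * A - i * D| ≤ N * A := by exact_mod_cast h1
  -- |j*A - i*D| ≤ A - 1
  have hm0 : 0 ≤ i * D / A := Int.ediv_nonneg (by positivity) hA.le
  have hres := hscc (i * D / A) hm0
  have hmod : (i * D / A) * A - i * D = -(i * D % A) := by
    rw [Int.emod_def]; ring
  have hresle : |j * A - i * D| ≤ A - 1 := by
    rw [hmod, abs_neg, abs_of_nonneg (Int.emod_nonneg _ hA.ne')] at hres
    have := Int.emod_lt_of_pos (i * D) hA
    omega
  -- triangle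
  have htri : |j - k| * A ≤ |j * A - i * D| + |k * A - i * D| := by
    have e : (j - k) * A = (j * A - i * D) - (k * A - i * D) := by ring
    calc |j - k| * A = |(j - k) * A| := by rw [abs_mul, abs_of_pos hA]
    _ = |(j * A - i * D) - (k * A - i * D)| := by rw [e]
    _ ≤ _ := abs_sub _ _
  have hlt : |j - k| * A < (N + 1) * A := by
    calc |j - k| * A ≤ (A - 1) + N * A := by linarith
    _ < (N + 1) * A := by linarith
  have := lt_of_mul_lt_mul_right hlt hA.le
  omega
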